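/- arXiv:1604.04889 — 2 statements merged into one kernel-verified Lean document; each statement's English description precedes it below -/
import Mathlib

section
/- Let C be a normed *-algebra, A ⊆ C a *-subalgebra and X ⊆ C a linear subspace with AX ⊆ X, XA ⊆ X, X*X ⊆ A, XX* ⊆ A. Define X^k for k ∈ ℤ by X^k = X·X···X (k times, closed-span product) for k ≥ 1, X^0 = A, and X^k = (X*)^{-k} for k ≤ -1. Then X^k · X^l ⊆ closure(X^{k+l}) for all k, l ∈ ℤ. -/
variable {C : Type*} [NonUnitalNormedRing C] [StarRing C] [NormedSpace ℂ C]
  [IsScalarTower ℂ C C] [SMulCommClass ℂ C C] [StarModule ℂ C] [NormedStarGroup C]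

/-- `mulSpan X Y` is the closed linear span of the elementwise products `{x * y}`. -/
def mulSpan (X Y : Set C) : Set C :=
  closure (Submodule.span ℂ {z : C | ∃ x ∈ X, ∃ y ∈ Y, z = x * y} : Set C)

/-- `addCl X Y` is the closure of the set of elementwise sums. -/
def addCl (X Y : Set C) : Set C :=
  closure {z : C | ∃ x ∈ X, ∃ y ∈ Y, z = x + y}

/-- `sumCl X` is the closure of the set of finite sums from the family `X`. -/
def sumCl {ι : Type*} (X : ι → Set C) : Set C :=
  closure {z : C | ∃ (s : Finset ι) (f : ι → C), (∀ i ∈ s, f i ∈ X i) ∧ z = ∑ i ∈ s, f i}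

/-- `npowSet X n` is the `(n+1)`-fold closed-span product `X · X ⋯ X`. -/
def npowSet (X : Set C) : ℕ → Set C
  | 0 => X
  | n + 1 => mulSpan (npowSet X n) X

/-- Integer powers: `X^k` for `k ≥ 1`, `X^0 = A`, `X^k = (X*)^(-k)` for `k ≤ -1`. -/
def zpowSet (A X : Set C) (k : ℤ) : Set C :=
  if k = 0 then A
  else if 0 < k then npowSet X (k.toNat - 1)
  else npowSet ((star ·) '' X) ((-k).toNat - 1)

set_option linter.unusedSectionVars false

def mulSub (X Y : Set C) : Submodule ℂ C :=
  (Submodule.span ℂ {z : C | ∃ x ∈ X, ∃ y ∈ Y, z = x * y}).topologicalClosure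

lemma mulSub_coe (X Y : Set C) : ((mulSub X Y : Submodule ℂ C) : Set C) = mulSpan X Y :=
  Submodule.topologicalClosure_coe _

lemma isClosed_mulSpan (X Y : Set C) : IsClosed (mulSpan X Y) := isClosed_closure

lemma mem_mulSpan {X Y : Set C} {x y : C} (hx : x ∈ X) (hy : y ∈ Y) :
    x * y ∈ mulSpan X Y :=
  subset_closure (Submodule.subset_span ⟨x, hx, y, hy, rfl⟩)

lemma mulSpan_mono {X₁ X₂ Y₁ Y₂ : Set C} (hX : X₁ ⊆ X₂) (hY : Y₁ ⊆ Y₂) :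
    mulSpan X₁ Y₁ ⊆ mulSpan X₂ Y₂ := by
  apply closure_mono
  have := Submodule.span_mono (R := ℂ)
    (show {z : C | ∃ x ∈ X₁, ∃ y ∈ Y₁, z = x * y} ⊆ {z : C | ∃ x ∈ X₂, ∃ y ∈ Y₂, z = x * y} by
      rintro z ⟨x, hx, y, hy, rfl⟩; exact ⟨x, hX hx, y, hY hy, rfl⟩)
  exact fun z hz => this hz

lemma mulSpan_le {X Y : Set C} {M : Submodule ℂ C} (hM : IsClosed (M : Set C))
    (h : ∀ x ∈ X, ∀ y ∈ Y, x * y ∈ M) : mulSpan X Y ⊆ M := by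
  have h1 : Submodule.span ℂ {z : C | ∃ x ∈ X, ∃ y ∈ Y, z = x * y} ≤ M :=
    Submodule.span_le.mpr (by rintro z ⟨x, hx, y, hy, rfl⟩; exact h x hx y hy)
  exact closure_minimal (fun z hz => h1 hz) hM

lemma mulSpan_subset_closure {X Y T : Set C} (hT : (Submodule.span ℂ T : Set C) ⊆ T)
    (h : ∀ x ∈ X, ∀ y ∈ Y, x * y ∈ T) : mulSpan X Y ⊆ closure T := by
  have h1 : Submodule.span ℂ {z : C | ∃ x ∈ X, ∃ y ∈ Y, z = x * y} ≤ Submodule.span ℂ T :=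
    Submodule.span_mono (by rintro z ⟨x, hx, y, hy, rfl⟩; exact h x hx y hy)
  exact closure_mono (fun z hz => hT (h1 hz))

set_option linter.unusedSectionVars false

lemma isClosed_mulSub (X Y : Set C) : IsClosed ((mulSub X Y : Submodule ℂ C) : Set C) := by
  rw [mulSub_coe]; exact isClosed_closure

lemma mulSpan_closure_left {X Y : Set C} : mulSpan (closure X) Y ⊆ mulSpan X Y := by
  rw [← mulSub_coe X Y]
  apply mulSpan_le (isClosed_mulSub X Y)
  intro x hx y hy
  have hc : Continuous fun w : C => w * y := continuous_mul_right y
  have h1 : x * y ∈ closure ((fun w : C => w * y) '' X) :=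
    image_closure_subset_closure_image hc ⟨x, hx, rfl⟩
  have h2 : (fun w : C => w * y) '' X ⊆ (mulSub X Y : Set C) := by
    rintro z ⟨w, hw, rfl⟩
    rw [mulSub_coe]; exact mem_mulSpan hw hy
  exact closure_minimal h2 (isClosed_mulSub X Y) h1

lemma mulSpan_closure_right {X Y : Set C} : mulSpan X (closure Y) ⊆ mulSpan X Y := by
  rw [← mulSub_coe X Y]
  apply mulSpan_le (isClosed_mulSub X Y)
  intro x hx y hy
  have hc : Continuous fun w : C => x * w := continuous_mul_left x
  have h1 : x * y ∈ closure ((fun w : C => x * w) '' Y) :=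
    image_closure_subset_closure_image hc ⟨y, hy, rfl⟩
  have h2 : (fun w : C => x * w) '' Y ⊆ (mulSub X Y : Set C) := by
    rintro z ⟨w, hw, rfl⟩
    rw [mulSub_coe]; exact mem_mulSpan hx hw
  exact closure_minimal h2 (isClosed_mulSub X Y) h1

lemma mulSpan_assoc₁ {X Y Z : Set C} : mulSpan (mulSpan X Y) Z ⊆ mulSpan X (mulSpan Y Z) := by
  rw [← mulSub_coe X (mulSpan Y Z)]
  apply mulSpan_le (isClosed_mulSub _ _)
  intro p hp z hz
  have hM' : mulSpan X Y ⊆ ((mulSub X (mulSpan Y Z)).comap (LinearMap.mulRight ℂ z) : Set C) := by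
    apply mulSpan_le
    · show IsClosed ((fun w : C => w * z) ⁻¹' (mulSub X (mulSpan Y Z) : Set C))
      exact (isClosed_mulSub X (mulSpan Y Z)).preimage (continuous_mul_right z)
    · intro x hx y hy
      simp only [Submodule.mem_comap, LinearMap.mulRight_apply]
      rw [mul_assoc]
      show x * (y * z) ∈ (mulSub X (mulSpan Y Z) : Set C)
      rw [mulSub_coe]
      exact mem_mulSpan hx (mem_mulSpan hy hz)
  exact hM' hp

lemma mulSpan_assoc₂ {X Y Z : Set C} : mulSpan X (mulSpan Y Z) ⊆ mulSpan (mulSpan X Y) Z := by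
  rw [← mulSub_coe (mulSpan X Y) Z]
  apply mulSpan_le (isClosed_mulSub _ _)
  intro x hx p hp
  have hM' : mulSpan Y Z ⊆ ((mulSub (mulSpan X Y) Z).comap (LinearMap.mulLeft ℂ x) : Set C) := by
    apply mulSpan_le
    · show IsClosed ((fun w : C => x * w) ⁻¹' (mulSub (mulSpan X Y) Z : Set C))
      exact (isClosed_mulSub _ _).preimage (continuous_mul_left x)
    · intro y hy z hz
      simp only [Submodule.mem_comap, LinearMap.mulLeft_apply]
      rw [← mul_assoc]
      show x * y * z ∈ (mulSub (mulSpan X Y) Z : Set C)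
      rw [mulSub_coe]
      exact mem_mulSpan (mem_mulSpan hx hy) hz
  exact hM' hp

lemma npow_mul_npow (S : Set C) : ∀ b a : ℕ,
    mulSpan (npowSet S a) (npowSet S b) ⊆ npowSet S (a + b + 1)
  | 0, a => subset_rfl
  | b+1, a => by
    show mulSpan (npowSet S a) (mulSpan (npowSet S b) S) ⊆ _
    refine mulSpan_assoc₂.trans ?_
    refine (mulSpan_mono (npow_mul_npow S b a) subset_rfl).trans ?_
    show npowSet S (a + b + 1 + 1) ⊆ npowSet S (a + (b + 1) + 1)
    rw [show a + (b + 1) + 1 = a + b + 1 + 1 by omega]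

lemma npow_mul_absorb {S T : Set C} (hSspan : (Submodule.span ℂ S : Set C) ⊆ S)
    (hST : ∀ x ∈ S, ∀ t ∈ T, x * t ∈ S) :
    ∀ n, mulSpan (npowSet S n) T ⊆ closure (npowSet S n)
  | 0 => mulSpan_subset_closure hSspan hST
  | n + 1 => by
    show mulSpan (mulSpan (npowSet S n) S) T ⊆ _
    refine mulSpan_assoc₁.trans ?_
    refine (mulSpan_mono subset_rfl (mulSpan_subset_closure hSspan hST)).trans ?_
    refine mulSpan_closure_right.trans ?_
    exact subset_closure

lemma absorb_mul_npow {S T : Set C} (hSspan : (Submodule.span ℂ S : Set C) ⊆ S)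
    (hTS : ∀ t ∈ T, ∀ x ∈ S, t * x ∈ S) :
    ∀ n, mulSpan T (npowSet S n) ⊆ closure (npowSet S n)
  | 0 => mulSpan_subset_closure hSspan hTS
  | n + 1 => by
    show mulSpan T (mulSpan (npowSet S n) S) ⊆ _
    refine mulSpan_assoc₂.trans ?_
    refine (mulSpan_mono ((absorb_mul_npow hSspan hTS n)) subset_rfl).trans ?_
    refine mulSpan_closure_left.trans ?_
    exact subset_closure

lemma zpow_zero' (A S : Set C) : zpowSet A S 0 = A := by simp [zpowSet]

lemma zpow_pos' (A S : Set C) {k : ℤ} (h : 0 < k) :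
    zpowSet A S k = npowSet S (k.toNat - 1) := by
  rw [zpowSet, if_neg (by omega), if_pos h]

lemma zpow_neg' (A S : Set C) {k : ℤ} (h : k < 0) :
    zpowSet A S k = npowSet ((star ·) '' S) ((-k).toNat - 1) := by
  rw [zpowSet, if_neg (by omega), if_neg (by omega)]

lemma star_span_closed {S : Set C} (hS : (Submodule.span ℂ S : Set C) ⊆ S) :
    (Submodule.span ℂ ((star ·) '' S) : Set C) ⊆ (star ·) '' S := by
  let M : Submodule ℂ C :=
    { carrier := (star ·) '' S
      add_mem' := by
        rintro a b ⟨x, hx, rfl⟩ ⟨y, hy, rfl⟩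
        exact ⟨x + y, hS (Submodule.add_mem _ (Submodule.subset_span hx)
          (Submodule.subset_span hy)), star_add x y⟩
      zero_mem' := ⟨0, hS (Submodule.zero_mem _), star_zero C⟩
      smul_mem' := by
        rintro c a ⟨x, hx, rfl⟩
        refine ⟨(starRingEnd ℂ) c • x,
          hS (Submodule.smul_mem _ _ (Submodule.subset_span hx)), ?_⟩
        simp [star_smul] }
  have hle : Submodule.span ℂ ((star ·) '' S) ≤ M :=
    Submodule.span_le.mpr (fun w hw => hw)
  exact fun z hz => hle hz

section Aux

variable {A S : Set C}
  (hAspan : (Submodule.span ℂ A : Set C) ⊆ A)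
  (hSspan : (Submodule.span ℂ S : Set C) ⊆ S)
  (hAstar : ∀ a ∈ A, star a ∈ A)
  (hAA : ∀ a ∈ A, ∀ b ∈ A, a * b ∈ A)
  (hAS : ∀ a ∈ A, ∀ x ∈ S, a * x ∈ S)
  (hSA : ∀ x ∈ S, ∀ a ∈ A, x * a ∈ S)
  (hSsS : ∀ x ∈ S, ∀ y ∈ S, star x * y ∈ A)
  (hSSs : ∀ x ∈ S, ∀ y ∈ S, x * star y ∈ A)

include hAspan hSSs in
lemma base_SY : mulSpan S ((star ·) '' S) ⊆ closure A :=
  mulSpan_subset_closure hAspan (by rintro x hx y ⟨y', h, rfl⟩; exact hSSs x hx y' h)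

include hAspan hSspan hSA hSSs in
lemma step_one : ∀ a : ℕ,
    mulSpan (npowSet S a) ((star ·) '' S) ⊆ closure (zpowSet A S (a : ℤ))
  | 0 => by rw [show ((0 : ℕ) : ℤ) = 0 by norm_num, zpow_zero']; exact base_SY hAspan hSSs
  | a + 1 => by
    rw [zpow_pos' A S (by omega : (0:ℤ) < ((a+1 : ℕ) : ℤ)),
      show ((((a+1 : ℕ)) : ℤ).toNat - 1) = a from by omega]
    show mulSpan (mulSpan (npowSet S a) S) _ ⊆ _
    refine mulSpan_assoc₁.trans ?_
    refine (mulSpan_mono subset_rfl (base_SY hAspan hSSs)).trans ?_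
    refine mulSpan_closure_right.trans ?_
    exact npow_mul_absorb hSspan hSA a

include hAspan hSspan hAstar hSA hSSs in
lemma mixed (a : ℕ) : ∀ b : ℕ,
    mulSpan (npowSet S a) (npowSet ((star ·) '' S) b)
      ⊆ closure (zpowSet A S ((a : ℤ) - (b : ℤ))) := by
  intro b
  induction b with
  | zero =>
    rw [show ((a : ℤ) - ((0:ℕ) : ℤ)) = ((a : ℕ) : ℤ) from by omega]
    exact step_one hAspan hSspan hSA hSSs a
  | succ b IH =>
    show mulSpan (npowSet S a) (mulSpan (npowSet ((star ·) '' S) b) ((star ·) '' S)) ⊆ _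
    refine mulSpan_assoc₂.trans ?_
    refine (mulSpan_mono IH subset_rfl).trans ?_
    refine mulSpan_closure_left.trans ?_
    rcases lt_trichotomy ((a : ℤ) - (b : ℤ)) 0 with hlt | heq | hgt
    · rw [zpow_neg' A S hlt]
      rw [zpow_neg' A S (show (a:ℤ) - ((b+1 : ℕ) : ℤ) < 0 by omega)]
      rw [show ((-((a:ℤ) - ((b+1 : ℕ) : ℤ))).toNat - 1)
          = ((-((a:ℤ) - (b:ℤ))).toNat - 1) + 1 from by omega]
      exact subset_closure
    · rw [heq, zpow_zero']
      rw [zpow_neg' A S (show (a:ℤ) - ((b+1 : ℕ) : ℤ) < 0 by omega)]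
      rw [show ((-((a:ℤ) - ((b+1 : ℕ) : ℤ))).toNat - 1) = 0 from by omega]
      refine mulSpan_subset_closure (star_span_closed hSspan) ?_
      rintro p hp q ⟨x, hx, rfl⟩
      exact ⟨x * star p, hSA x hx (star p) (hAstar p hp), by simp [star_mul]⟩
    · rw [zpow_pos' A S hgt]
      rw [show ((a:ℤ) - ((b+1 : ℕ) : ℤ)) = (((((a:ℤ) - (b:ℤ)).toNat - 1 : ℕ)) : ℤ) from by omega]
      exact step_one hAspan hSspan hSA hSSs _

end Aux

section Aux2

variable {A S : Set C}
  (hAspan : (Submodule.span ℂ A : Set C) ⊆ A)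
  (hSspan : (Submodule.span ℂ S : Set C) ⊆ S)
  (hAstar : ∀ a ∈ A, star a ∈ A)
  (hAA : ∀ a ∈ A, ∀ b ∈ A, a * b ∈ A)
  (hAS : ∀ a ∈ A, ∀ x ∈ S, a * x ∈ S)
  (hSA : ∀ x ∈ S, ∀ a ∈ A, x * a ∈ S)
  (hSsS : ∀ x ∈ S, ∀ y ∈ S, star x * y ∈ A)
  (hSSs : ∀ x ∈ S, ∀ y ∈ S, x * star y ∈ A)

include hAspan hSspan hAstar hAA hAS hSA hSsS hSSs in
lemma aux_nonneg (k l : ℤ) (hk : 0 ≤ k) :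
    mulSpan (zpowSet A S k) (zpowSet A S l) ⊆ closure (zpowSet A S (k + l)) := by
  have hAY : ∀ a ∈ A, ∀ y ∈ (star ·) '' S, a * y ∈ (star ·) '' S := by
    rintro a ha y ⟨x, hx, rfl⟩
    exact ⟨x * star a, hSA x hx (star a) (hAstar a ha), by simp [star_mul]⟩
  rcases eq_or_lt_of_le hk with hk0 | hkpos
  · subst hk0
    rw [zpow_zero', zero_add]
    rcases lt_trichotomy l 0 with hl | hl | hl
    · rw [zpow_neg' A S hl]
      exact absorb_mul_npow (star_span_closed hSspan) hAY _
    · subst hl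
      rw [zpow_zero']
      exact mulSpan_subset_closure hAspan hAA
    · rw [zpow_pos' A S hl]
      exact absorb_mul_npow hSspan hAS _
  · rcases lt_trichotomy l 0 with hl | hl | hl
    · rw [zpow_pos' A S hkpos, zpow_neg' A S hl]
      have h := mixed hAspan hSspan hAstar hSA hSSs (k.toNat - 1) ((-l).toNat - 1)
      rw [show ((k.toNat - 1 : ℕ) : ℤ) - (((-l).toNat - 1 : ℕ) : ℤ) = k + l from by omega] at h
      exact h
    · subst hl
      rw [add_zero, zpow_zero', zpow_pos' A S hkpos]
      exact npow_mul_absorb hSspan hSA _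
    · rw [zpow_pos' A S hkpos, zpow_pos' A S hl, zpow_pos' A S (by omega : (0:ℤ) < k + l)]
      rw [show ((k + l).toNat - 1) = (k.toNat - 1) + (l.toNat - 1) + 1 from by omega]
      exact (npow_mul_npow S _ _).trans subset_closure

end Aux2

lemma zpow_star (A S : Set C) (k : ℤ) :
    zpowSet A S k = zpowSet A ((star ·) '' S) (-k) := by
  have hss : (star ·) '' ((star ·) '' S) = S := by
    rw [Set.image_image]
    simp
  rcases lt_trichotomy k 0 with hk | hk | hk
  · rw [zpow_neg' A S hk, zpow_pos' A _ (by omega)]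
  · subst hk; rw [neg_zero]; simp [zpowSet]
  · rw [zpow_pos' A S hk, zpow_neg' A _ (by omega), hss, neg_neg]

/-- `X^k · X^l ⊆ closure (X^(k+l))` for all integers `k, l`. -/
theorem zpowSet_mul_subset (A : NonUnitalStarSubalgebra ℂ C) (X : Submodule ℂ C)
    (hAX : ∀ a ∈ A, ∀ x ∈ X, a * x ∈ X) (hXA : ∀ x ∈ X, ∀ a ∈ A, x * a ∈ X)
    (hXsX : ∀ x ∈ X, ∀ y ∈ X, star x * y ∈ A) (hXXs : ∀ x ∈ X, ∀ y ∈ X, x * star y ∈ A) (k l : ℤ) :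
    mulSpan (zpowSet (A : Set C) (X : Set C) k) (zpowSet (A : Set C) (X : Set C) l)
      ⊆ closure (zpowSet (A : Set C) (X : Set C) (k + l)) := by
  have hAspan : (Submodule.span ℂ (A : Set C) : Set C) ⊆ (A : Set C) := by
    have hle : Submodule.span ℂ (A : Set C) ≤ A.toNonUnitalSubalgebra.toSubmodule :=
      Submodule.span_le.mpr (fun z hz => hz)
    exact fun z hz => hle hz
  have hSspan : (Submodule.span ℂ (X : Set C) : Set C) ⊆ (X : Set C) := by
    rw [Submodule.span_eq]
  have hAstar : ∀ a ∈ (A : Set C), star a ∈ (A : Set C) := fun a ha => star_mem ha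
  have hAA : ∀ a ∈ (A : Set C), ∀ b ∈ (A : Set C), a * b ∈ (A : Set C) :=
    fun a ha b hb => mul_mem ha hb
  rcases le_or_gt 0 k with hk | hk
  · exact aux_nonneg hAspan hSspan hAstar hAA hAX hXA hXsX hXXs k l hk
  · set Y := (star ·) '' (X : Set C) with hY
    have hYspan := star_span_closed hSspan
    have hAY : ∀ a ∈ (A : Set C), ∀ y ∈ Y, a * y ∈ Y := by
      rintro a ha y ⟨x, hx, rfl⟩
      exact ⟨x * star a, hXA x hx (star a) (star_mem ha), by simp [star_mul]⟩
    have hYA : ∀ y ∈ Y, ∀ a ∈ (A : Set C), y * a ∈ Y := by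
      rintro y ⟨x, hx, rfl⟩ a ha
      exact ⟨star a * x, hAX (star a) (star_mem ha) x hx, by simp [star_mul]⟩
    have hYsY : ∀ u ∈ Y, ∀ v ∈ Y, star u * v ∈ (A : Set C) := by
      rintro u ⟨x, hx, rfl⟩ v ⟨y, hy, rfl⟩
      simpa using hXXs x hx y hy
    have hYYs : ∀ u ∈ Y, ∀ v ∈ Y, u * star v ∈ (A : Set C) := by
      rintro u ⟨x, hx, rfl⟩ v ⟨y, hy, rfl⟩
      simpa using hXsX x hx y hy
    rw [zpow_star (A : Set C) (X : Set C) k, zpow_star (A : Set C) (X : Set C) l,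
      zpow_star (A : Set C) (X : Set C) (k + l), neg_add]
    exact aux_nonneg hAspan hYspan hAstar hAA hAY hYA hYsY hYYs (-k) (-l) (by omega)
end

section
/- Let C be a normed *-algebra, A, B ⊆ C *-subalgebras, and X ⊆ C a subspace with AX ⊆ X, XA ⊆ X, X*X ⊆ A, XX* ⊆ A. If B·A = A·B and B·X = X·B (closed-span products), then B·A[X] = A[X]·B, where A[X] is the closed *-subalgebra generated by A ∪ X. -/
variable {C : Type*} [NonUnitalNormedRing C] [StarRing C] [NormedSpace ℂ C]
  [IsScalarTower ℂ C C] [SMulCommClass ℂ C C] [StarModule ℂ C] [NormedStarGroup C]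

def mset (X Y : Set C) : Set C := {z : C | ∃ x ∈ X, ∃ y ∈ Y, z = x * y}

lemma mulSpan_def (X Y : Set C) : mulSpan X Y = closure (Submodule.span ℂ (mset X Y) : Set C) := rfl

def MM (X Y : Set C) : Submodule ℂ C := (Submodule.span ℂ (mset X Y)).topologicalClosure

lemma MM_coe (X Y : Set C) : (MM X Y : Set C) = mulSpan X Y :=
  Submodule.topologicalClosure_coe _

lemma MM_closed (X Y : Set C) : IsClosed (MM X Y : Set C) :=
  Submodule.isClosed_topologicalClosure _

lemma mem_MM {X Y : Set C} {x y : C} (hx : x ∈ X) (hy : y ∈ Y) : x * y ∈ MM X Y :=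
  Submodule.le_topologicalClosure _ (Submodule.subset_span ⟨x, hx, y, hy, rfl⟩)

lemma mulSpan_mono_s8 {X Y X' Y' : Set C} (hX : X ⊆ X') (hY : Y ⊆ Y') :
    mulSpan X Y ⊆ mulSpan X' Y' := by
  apply closure_mono
  apply Submodule.span_mono
  rintro z ⟨x, hx, y, hy, rfl⟩
  exact ⟨x, hX hx, y, hY hy, rfl⟩

lemma mul_left_mem_of_closure (M : Submodule ℂ C) (hM : IsClosed (M : Set C))
    (a : C) {S : Set C} (h : ∀ s ∈ S, a * s ∈ M)
    {y : C} (hy : y ∈ closure (Submodule.span ℂ S : Set C)) : a * y ∈ M := by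
  set L : C →L[ℂ] C := ContinuousLinearMap.mul ℂ C a with hL
  have h1 : Submodule.span ℂ S ≤ Submodule.comap (L : C →ₗ[ℂ] C) M :=
    Submodule.span_le.2 fun s hs => by simpa [hL] using h s hs
  have h2 : closure (Submodule.span ℂ S : Set C) ⊆ L ⁻¹' M :=
    closure_minimal h1 (hM.preimage L.continuous)
  simpa [hL] using h2 hy

lemma mul_right_mem_of_closure (M : Submodule ℂ C) (hM : IsClosed (M : Set C))
    (a : C) {S : Set C} (h : ∀ s ∈ S, s * a ∈ M)
    {y : C} (hy : y ∈ closure (Submodule.span ℂ S : Set C)) : y * a ∈ M := by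
  set L : C →L[ℂ] C := (ContinuousLinearMap.mul ℂ C).flip a with hL
  have h1 : Submodule.span ℂ S ≤ Submodule.comap (L : C →ₗ[ℂ] C) M :=
    Submodule.span_le.2 fun s hs => by simpa [hL] using h s hs
  have h2 : closure (Submodule.span ℂ S : Set C) ⊆ L ⁻¹' M :=
    closure_minimal h1 (hM.preimage L.continuous)
  simpa [hL] using h2 hy

lemma star_mem_of_closure (M : Submodule ℂ C) (hM : IsClosed (M : Set C))
    {S : Set C} (h : ∀ s ∈ S, star s ∈ M)
    {y : C} (hy : y ∈ closure (Submodule.span ℂ S : Set C)) : star y ∈ M := by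
  have hcl : IsClosed {x : C | star x ∈ M} := hM.preimage continuous_star
  have h1 : (Submodule.span ℂ S : Set C) ⊆ {x : C | star x ∈ M} := by
    intro z hz
    induction hz using Submodule.span_induction with
    | mem s hs => exact h s hs
    | zero => simp
    | add x y _ _ hx hy => simpa [star_add] using M.add_mem hx hy
    | smul c x _ hx => simpa [star_smul] using M.smul_mem _ hx
  exact closure_minimal h1 hcl hy
set_option linter.unusedSectionVars false in
set_option maxHeartbeats 1000000 in
/-- If `B` commutes with `A` and with `X` then `B` commutes with `A[X]`. -/
theorem mulSpan_generated_comm (A : NonUnitalStarSubalgebra ℂ C) (X : Submodule ℂ C)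
    (hAX : ∀ a ∈ A, ∀ x ∈ X, a * x ∈ X) (hXA : ∀ x ∈ X, ∀ a ∈ A, x * a ∈ X)
    (hXsX : ∀ x ∈ X, ∀ y ∈ X, star x * y ∈ A) (hXXs : ∀ x ∈ X, ∀ y ∈ X, x * star y ∈ A) (B : NonUnitalStarSubalgebra ℂ C)
    (hBA : mulSpan (B : Set C) (A : Set C) = mulSpan (A : Set C) (B : Set C))
    (hBX : mulSpan (B : Set C) (X : Set C) = mulSpan (X : Set C) (B : Set C)) :
    mulSpan (B : Set C)
        (closure ((NonUnitalStarAlgebra.adjoin ℂ ((A : Set C) ∪ (X : Set C)) :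
          NonUnitalStarSubalgebra ℂ C) : Set C))
      = mulSpan
        (closure ((NonUnitalStarAlgebra.adjoin ℂ ((A : Set C) ∪ (X : Set C)) :
          NonUnitalStarSubalgebra ℂ C) : Set C)) (B : Set C) := by
  set E := NonUnitalStarAlgebra.adjoin ℂ ((A : Set C) ∪ (X : Set C)) with hE
  set M₁ := MM (E : Set C) (B : Set C) with hM₁def
  set M₂ := MM (B : Set C) (E : Set C) with hM₂def
  have hAE : (A : Set C) ⊆ (E : Set C) :=
    Set.subset_union_left.trans (NonUnitalStarAlgebra.subset_adjoin ℂ _)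
  have hXE : (X : Set C) ⊆ (E : Set C) :=
    Set.subset_union_right.trans (NonUnitalStarAlgebra.subset_adjoin ℂ _)
  -- absorption of E on the appropriate side
  have f1 : ∀ a ∈ E, ∀ m ∈ M₁, a * m ∈ M₁ := by
    intro a ha m hm
    refine mul_left_mem_of_closure M₁ (MM_closed _ _) a (S := mset (E : Set C) (B : Set C)) ?_ ?_
    · rintro s ⟨a', ha', b, hb, rfl⟩
      rw [← mul_assoc]
      exact mem_MM (mul_mem ha ha') hb
    · exact hm
  have f2 : ∀ a ∈ E, ∀ m ∈ M₂, m * a ∈ M₂ := by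
    intro a ha m hm
    refine mul_right_mem_of_closure M₂ (MM_closed _ _) a (S := mset (B : Set C) (E : Set C)) ?_ ?_
    · rintro s ⟨b, hb, a', ha', rfl⟩
      rw [mul_assoc]
      exact mem_MM hb (mul_mem ha' ha)
    · exact hm
  -- star exchanges M₁ and M₂
  have f3 : ∀ m ∈ M₂, star m ∈ M₁ := by
    intro m hm
    refine star_mem_of_closure M₁ (MM_closed _ _) (S := mset (B : Set C) (E : Set C)) ?_ hm
    rintro s ⟨b, hb, a', ha', rfl⟩
    rw [star_mul]
    exact mem_MM (star_mem ha') (star_mem hb)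
  have f3' : ∀ m ∈ M₁, star m ∈ M₂ := by
    intro m hm
    refine star_mem_of_closure M₂ (MM_closed _ _) (S := mset (E : Set C) (B : Set C)) ?_ hm
    rintro s ⟨a', ha', b, hb, rfl⟩
    rw [star_mul]
    exact mem_MM (star_mem hb) (star_mem ha')
  -- every element of E commutes with B into M₁ / M₂
  have hD : ∀ y ∈ E, (∀ b ∈ B, b * y ∈ M₁) ∧ (∀ b ∈ B, y * b ∈ M₂) := by
    intro y hy
    induction hy using NonUnitalStarAlgebra.adjoin_induction with
    | mem x hx =>
      rcases hx with hx | hx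
      · constructor
        · intro b hb
          have h1 : b * x ∈ mulSpan (B : Set C) (A : Set C) :=
            subset_closure (Submodule.subset_span ⟨b, hb, x, hx, rfl⟩)
          rw [hBA] at h1
          have h2 : mulSpan (A : Set C) (B : Set C) ⊆ (M₁ : Set C) := by
            rw [hM₁def, MM_coe]; exact mulSpan_mono_s8 hAE (subset_refl _)
          exact h2 h1
        · intro b hb
          have h1 : x * b ∈ mulSpan (A : Set C) (B : Set C) :=
            subset_closure (Submodule.subset_span ⟨x, hx, b, hb, rfl⟩)
          rw [← hBA] at h1
          have h2 : mulSpan (B : Set C) (A : Set C) ⊆ (M₂ : Set C) := by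
            rw [hM₂def, MM_coe]; exact mulSpan_mono_s8 (subset_refl _) hAE
          exact h2 h1
      · constructor
        · intro b hb
          have h1 : b * x ∈ mulSpan (B : Set C) (X : Set C) :=
            subset_closure (Submodule.subset_span ⟨b, hb, x, hx, rfl⟩)
          rw [hBX] at h1
          have h2 : mulSpan (X : Set C) (B : Set C) ⊆ (M₁ : Set C) := by
            rw [hM₁def, MM_coe]; exact mulSpan_mono_s8 hXE (subset_refl _)
          exact h2 h1
        · intro b hb
          have h1 : x * b ∈ mulSpan (X : Set C) (B : Set C) :=
            subset_closure (Submodule.subset_span ⟨x, hx, b, hb, rfl⟩)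
          rw [← hBX] at h1
          have h2 : mulSpan (B : Set C) (X : Set C) ⊆ (M₂ : Set C) := by
            rw [hM₂def, MM_coe]; exact mulSpan_mono_s8 (subset_refl _) hXE
          exact h2 h1
    | add x y hx hy ihx ihy =>
      exact ⟨fun b hb => by simpa [mul_add] using M₁.add_mem (ihx.1 b hb) (ihy.1 b hb),
             fun b hb => by simpa [add_mul] using M₂.add_mem (ihx.2 b hb) (ihy.2 b hb)⟩
    | zero => exact ⟨fun b hb => by simpa using M₁.zero_mem, fun b hb => by simpa using M₂.zero_mem⟩
    | mul x y hx hy ihx ihy =>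
      constructor
      · intro b hb
        rw [← mul_assoc]
        refine mul_right_mem_of_closure M₁ (MM_closed _ _) y (S := mset (E : Set C) (B : Set C)) ?_ (ihx.1 b hb)
        rintro s ⟨a', ha', b', hb', rfl⟩
        rw [mul_assoc]
        exact f1 a' ha' _ (ihy.1 b' hb')
      · intro b hb
        rw [mul_assoc]
        refine mul_left_mem_of_closure M₂ (MM_closed _ _) x (S := mset (B : Set C) (E : Set C)) ?_ (ihy.2 b hb)
        rintro s ⟨b', hb', a', ha', rfl⟩
        rw [← mul_assoc]
        exact f2 a' ha' _ (ihx.2 b' hb')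
    | smul c x hx ihx =>
      exact ⟨fun b hb => by simpa [mul_smul_comm] using M₁.smul_mem c (ihx.1 b hb),
             fun b hb => by simpa [smul_mul_assoc] using M₂.smul_mem c (ihx.2 b hb)⟩
    | star x hx ihx =>
      constructor
      · intro b hb
        have h := f3 _ (ihx.2 (star b) (star_mem hb))
        rwa [star_mul, star_star] at h
      · intro b hb
        have h := f3' _ (ihx.1 (star b) (star_mem hb))
        rwa [star_mul, star_star] at h
  -- transfer to the closure of E
  have hD1 : ∀ b ∈ B, ∀ y ∈ closure (E : Set C), b * y ∈ M₁ := by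
    intro b hb y hy
    have hcl : IsClosed {y : C | b * y ∈ M₁} :=
      (MM_closed _ _).preimage (continuous_mul_left b)
    exact closure_minimal (fun y hy => (hD y hy).1 b hb) hcl hy
  have hD2 : ∀ b ∈ B, ∀ y ∈ closure (E : Set C), y * b ∈ M₂ := by
    intro b hb y hy
    have hcl : IsClosed {y : C | y * b ∈ M₂} :=
      (MM_closed _ _).preimage (continuous_mul_right b)
    exact closure_minimal (fun y hy => (hD y hy).2 b hb) hcl hy
  apply Set.Subset.antisymm
  · have s1 : mulSpan (B : Set C) (closure (E : Set C)) ⊆ (M₁ : Set C) := by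
      refine closure_minimal ?_ (MM_closed _ _)
      refine (Submodule.span_le.2 ?_ : _ ≤ M₁)
      rintro z ⟨b, hb, y, hy, rfl⟩
      exact hD1 b hb y hy
    refine s1.trans ?_
    rw [MM_coe]
    exact mulSpan_mono_s8 subset_closure (subset_refl _)
  · have s2 : mulSpan (closure (E : Set C)) (B : Set C) ⊆ (M₂ : Set C) := by
      refine closure_minimal ?_ (MM_closed _ _)
      refine (Submodule.span_le.2 ?_ : _ ≤ M₂)
      rintro z ⟨y, hy, b, hb, rfl⟩
      exact hD2 b hb y hy
    refine s2.trans ?_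
    rw [MM_coe]
    exact mulSpan_mono_s8 (subset_refl _) subset_closure
end
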